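/- arXiv:1206.1167 — 6 statements merged into one kernel-verified Lean document; each statement's English description precedes it below -/
import Mathlib

section
/- Let N ≥ 3 and define F(x,t) = (1/√(4πt))·exp(−(log|x| + (N−2)t)²/(4t)) for x ∈ ℝ^N \ {0} and t > 0. Then F satisfies the equation |x|^{-2}·∂_t F = ΔF at every point (x,t) with x ≠ 0, t > 0. -/
open Real

private lemma space1 (t b S ρ : ℝ) (ht : t ≠ 0) (hρ : 0 < ρ) :
    HasDerivAt (fun σ : ℝ => (1 / S) * Real.exp (-(Real.log σ + b) ^ 2 / (4 * t)))
      ((1 / S) * Real.exp (-(Real.log ρ + b) ^ 2 / (4 * t)) *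
        (-(Real.log ρ + b) / (2 * t * ρ))) ρ := by
  have h1 : HasDerivAt (fun σ : ℝ => Real.log σ + b) ρ⁻¹ ρ :=
    (Real.hasDerivAt_log hρ.ne').add_const b
  have h2 : HasDerivAt (fun σ : ℝ => -(Real.log σ + b) ^ 2 / (4 * t))
      (-((2 : ℕ) * (Real.log ρ + b) ^ 1 * ρ⁻¹) / (4 * t)) ρ :=
    ((h1.pow 2).neg).div_const (4 * t)
  have h4 := (h2.exp).const_mul (1 / S)
  refine h4.congr_deriv ?_
  field_simp
  ring

private lemma space2 (t b S ρ : ℝ) (ht : t ≠ 0) (hρ : 0 < ρ) :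
    HasDerivAt (fun σ : ℝ => (1 / S) * Real.exp (-(Real.log σ + b) ^ 2 / (4 * t)) *
        (-(Real.log σ + b) / (2 * t * σ)))
      ((1 / S) * Real.exp (-(Real.log ρ + b) ^ 2 / (4 * t)) *
        ((Real.log ρ + b) ^ 2 / (4 * t ^ 2 * ρ ^ 2) + (Real.log ρ + b - 1) / (2 * t * ρ ^ 2))) ρ := by
  have hP := space1 t b S ρ ht hρ
  have hnum : HasDerivAt (fun σ : ℝ => -(Real.log σ + b)) (-ρ⁻¹) ρ :=
    ((Real.hasDerivAt_log hρ.ne').add_const b).neg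
  have hden : HasDerivAt (fun σ : ℝ => 2 * t * σ) (2 * t) ρ := by
    simpa using (hasDerivAt_id ρ).const_mul (2 * t)
  have hden0 : 2 * t * ρ ≠ 0 := by positivity
  have hm := hnum.div hden hden0
  have hmul := hP.mul hm
  have hsc : (-(Real.log ρ + b) / (2 * t * ρ)) * (-(Real.log ρ + b) / (2 * t * ρ)) +
      ((-ρ⁻¹ * (2 * t * ρ) - -(Real.log ρ + b) * (2 * t)) / (2 * t * ρ) ^ 2) =
      (Real.log ρ + b) ^ 2 / (4 * t ^ 2 * ρ ^ 2) + (Real.log ρ + b - 1) / (2 * t * ρ ^ 2) := by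
    field_simp
    ring
  refine hmul.congr_deriv ?_
  simp only [Pi.div_apply]
  rw [← hsc]
  ring

private lemma timeDeriv (u t : ℝ) (c : ℝ) (ht : 0 < t) :
    HasDerivAt (fun s : ℝ => 1 / Real.sqrt (4 * π * s) *
        Real.exp (-(u + c * s) ^ 2 / (4 * s)))
      ((1 / Real.sqrt (4 * π * t)) * Real.exp (-(u + c * t) ^ 2 / (4 * t)) *
        (-(1 / (2 * t)) - (u + c * t) * c / (2 * t) + (u + c * t) ^ 2 / (4 * t ^ 2))) t := by
  have hπt : (0 : ℝ) < 4 * π * t := by positivity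
  have hSpos : 0 < Real.sqrt (4 * π * t) := Real.sqrt_pos.mpr hπt
  have hlin : HasDerivAt (fun s : ℝ => 4 * π * s) (4 * π) t := by
    simpa using (hasDerivAt_id t).const_mul (4 * π)
  have hsq : HasDerivAt (fun s : ℝ => Real.sqrt (4 * π * s))
      (1 / (2 * Real.sqrt (4 * π * t)) * (4 * π)) t :=
    (Real.hasDerivAt_sqrt hπt.ne').comp t hlin
  have hA : HasDerivAt (fun s : ℝ => (Real.sqrt (4 * π * s))⁻¹)
      (-(1 / (2 * Real.sqrt (4 * π * t)) * (4 * π)) / Real.sqrt (4 * π * t) ^ 2) t :=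
    hsq.inv hSpos.ne'
  have hnum : HasDerivAt (fun s : ℝ => -(u + c * s) ^ 2)
      (-((2 : ℕ) * (u + c * t) ^ 1 * c)) t := by
    have : HasDerivAt (fun s : ℝ => u + c * s) c t := by
      simpa using ((hasDerivAt_id t).const_mul c).const_add u
    exact (this.pow 2).neg
  have hden : HasDerivAt (fun s : ℝ => 4 * s) 4 t := by
    simpa using (hasDerivAt_id t).const_mul 4
  have hden0 : 4 * t ≠ 0 := by positivity
  have hg := hnum.div hden hden0
  have hmul := hA.mul hg.exp
  have : HasDerivAt (fun s : ℝ => 1 / Real.sqrt (4 * π * s) *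
      Real.exp (-(u + c * s) ^ 2 / (4 * s)))
      (-(1 / (2 * Real.sqrt (4 * π * t)) * (4 * π)) / Real.sqrt (4 * π * t) ^ 2 *
          Real.exp (-(u + c * t) ^ 2 / (4 * t)) +
        (Real.sqrt (4 * π * t))⁻¹ *
          (Real.exp (-(u + c * t) ^ 2 / (4 * t)) *
            ((-((2 : ℕ) * (u + c * t) ^ 1 * c) * (4 * t) - -(u + c * t) ^ 2 * 4) / (4 * t) ^ 2))) t := by
    simpa [one_div, Pi.mul_def] using hmul
  convert this using 1
  rw [Real.sq_sqrt hπt.le]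
  have hπ : π ≠ 0 := Real.pi_ne_zero
  field_simp
  ring

/-- The profile `F(x,t) = (4πt)^{-1/2} exp(-(log|x|+(N-2)t)²/(4t))` is a radially symmetric
solution of `|x|^{-2} ∂ₜ F = ΔF` away from the origin; in radial coordinates `r = |x| > 0`
the Laplacian reads `F_rr + ((N-1)/r) F_r`. -/
theorem stmt0 (N : ℕ) (hN : 3 ≤ N) (F : ℝ → ℝ → ℝ)
    (hF : ∀ r t : ℝ, F r t = (1 / Real.sqrt (4 * π * t)) *
      Real.exp (-(Real.log r + ((N : ℝ) - 2) * t) ^ 2 / (4 * t))) :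
    ∀ r t : ℝ, 0 < r → 0 < t →
      (1 / r ^ 2) * deriv (fun s => F r s) t =
        deriv (fun ρ => deriv (fun σ => F σ t) ρ) r
          + (((N : ℝ) - 1) / r) * deriv (fun σ => F σ t) r := by
  intro r t hr ht
  have ht' : t ≠ 0 := ht.ne'
  set c : ℝ := (N : ℝ) - 2 with hc
  set b : ℝ := c * t with hb
  set S : ℝ := Real.sqrt (4 * π * t) with hSdef
  -- time derivative
  have hTfun : (fun s => F r s) = fun s : ℝ => 1 / Real.sqrt (4 * π * s) *
      Real.exp (-(Real.log r + c * s) ^ 2 / (4 * s)) := by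
    funext s; rw [hF]
  have hT : deriv (fun s => F r s) t =
      (1 / S) * Real.exp (-(Real.log r + b) ^ 2 / (4 * t)) *
        (-(1 / (2 * t)) - (Real.log r + b) * c / (2 * t) + (Real.log r + b) ^ 2 / (4 * t ^ 2)) := by
    rw [hTfun]
    simpa [hb, hSdef, mul_comm] using (timeDeriv (Real.log r) t c ht).deriv
  -- first spatial derivative (as a function on positives)
  have hSfun : (fun σ => F σ t) = fun σ : ℝ => (1 / S) *
      Real.exp (-(Real.log σ + b) ^ 2 / (4 * t)) := by
    funext σ; rw [hF, hSdef, hb, hc]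
  have hd1 : ∀ ρ : ℝ, 0 < ρ → deriv (fun σ => F σ t) ρ =
      (1 / S) * Real.exp (-(Real.log ρ + b) ^ 2 / (4 * t)) * (-(Real.log ρ + b) / (2 * t * ρ)) := by
    intro ρ hρ
    rw [hSfun]
    exact (space1 t b S ρ ht' hρ).deriv
  -- second spatial derivative
  have hev : (fun ρ => deriv (fun σ => F σ t) ρ) =ᶠ[nhds r]
      (fun ρ : ℝ => (1 / S) * Real.exp (-(Real.log ρ + b) ^ 2 / (4 * t)) *
        (-(Real.log ρ + b) / (2 * t * ρ))) := by
    filter_upwards [isOpen_Ioi.eventually_mem (show r ∈ Set.Ioi (0:ℝ) from hr)] with ρ hρ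
    exact hd1 ρ hρ
  have hd2 : deriv (fun ρ => deriv (fun σ => F σ t) ρ) r =
      (1 / S) * Real.exp (-(Real.log r + b) ^ 2 / (4 * t)) *
        ((Real.log r + b) ^ 2 / (4 * t ^ 2 * r ^ 2) + (Real.log r + b - 1) / (2 * t * r ^ 2)) := by
    rw [hev.deriv_eq]
    exact (space2 t b S r ht' hr).deriv
  rw [hT, hd2, hd1 r hr]
  have hr' : r ≠ 0 := hr.ne'
  field_simp
  ring
end

section
/- Let N ≥ 3 and define E(x,t) = erfc((log|x| + (N−2)t)/(2√t)) for x ≠ 0, t > 0, where erfc(ξ) = (2/√π)∫_ξ^∞ e^{−θ²} dθ. Then E satisfies |x|^{-2}·∂_t E = ΔE at every point (x,t) with x ≠ 0, t > 0. -/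
open Real MeasureTheory

lemma hasDerivAt_gauss_Ioi (ξ : ℝ) :
    HasDerivAt (fun x : ℝ => ∫ θ in Set.Ioi x, Real.exp (-θ ^ 2))
      (-Real.exp (-ξ ^ 2)) ξ := by
  have hint : Integrable (fun θ : ℝ => Real.exp (-θ ^ 2)) := by
    simpa using integrable_exp_neg_mul_sq (by norm_num : (0:ℝ) < 1)
  have hcont : Continuous fun θ : ℝ => Real.exp (-θ ^ 2) := by
    exact Real.continuous_exp.comp (continuous_pow 2).neg
  have key : ∀ x : ℝ, (∫ θ in Set.Ioi x, Real.exp (-θ ^ 2))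
      = (∫ θ, Real.exp (-θ ^ 2)) - (∫ θ in Set.Iic 0, Real.exp (-θ ^ 2))
        - ∫ θ in (0:ℝ)..x, Real.exp (-θ ^ 2) := by
    intro x
    have h1 := intervalIntegral.integral_Iic_add_Ioi (b := x)
      hint.integrableOn hint.integrableOn
    have h2 := intervalIntegral.integral_Iic_sub_Iic
      (hint.integrableOn) (hint.integrableOn) (a := 0) (b := x)
    linarith
  have hF : HasDerivAt (fun x : ℝ => ∫ θ in (0:ℝ)..x, Real.exp (-θ ^ 2))
      (Real.exp (-ξ ^ 2)) ξ :=
    intervalIntegral.integral_hasDerivAt_right (hint.intervalIntegrable)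
      (hcont.stronglyMeasurableAtFilter volume _) hcont.continuousAt
  have h := (hasDerivAt_const ξ ((∫ θ, Real.exp (-θ ^ 2))
      - ∫ θ in Set.Iic 0, Real.exp (-θ ^ 2))).sub hF
  have heq : (fun x : ℝ => ∫ θ in Set.Ioi x, Real.exp (-θ ^ 2))
      = fun x : ℝ => ((∫ θ, Real.exp (-θ ^ 2)) - ∫ θ in Set.Iic 0, Real.exp (-θ ^ 2))
          - ∫ θ in (0:ℝ)..x, Real.exp (-θ ^ 2) := by
    funext x; rw [key x]
  rw [heq]
  rw [zero_sub] at h; exact h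


/-- The profile `E(x,t) = erfc((log|x|+(N-2)t)/(2√t))`, with
`erfc ξ = (2/√π)∫_ξ^∞ e^{-θ²} dθ`, solves `|x|^{-2} ∂ₜ E = ΔE` away from the origin;
in radial coordinates `r = |x| > 0` the Laplacian is `E_rr + ((N-1)/r) E_r`. -/
theorem stmt1 (N : ℕ) (hN : 3 ≤ N) (erfc : ℝ → ℝ)
    (herfc : ∀ ξ : ℝ, erfc ξ = (2 / Real.sqrt π) * ∫ θ in Set.Ioi ξ, Real.exp (-θ ^ 2))
    (E : ℝ → ℝ → ℝ)
    (hE : ∀ r t : ℝ, E r t = erfc ((Real.log r + ((N : ℝ) - 2) * t) / (2 * Real.sqrt t))) :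
    ∀ r t : ℝ, 0 < r → 0 < t →
      (1 / r ^ 2) * deriv (fun s => E r s) t =
        deriv (fun ρ => deriv (fun σ => E σ t) ρ) r
          + (((N : ℝ) - 1) / r) * deriv (fun σ => E σ t) r := by
  intro r t hr ht
  have hs0 : 0 < Real.sqrt t := Real.sqrt_pos.mpr ht
  set a : ℝ := (N : ℝ) - 2 with ha
  set c : ℝ := 2 / Real.sqrt π with hc
  set s : ℝ := Real.sqrt t with hsdef
  set L : ℝ := Real.log r with hL
  -- derivative of erfc
  have herfc' : ∀ ξ : ℝ, HasDerivAt erfc (-(c * Real.exp (-ξ ^ 2))) ξ := by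
    intro ξ
    have heq : erfc = fun ξ => c * ∫ θ in Set.Ioi ξ, Real.exp (-θ ^ 2) := funext herfc
    rw [heq]
    have := (hasDerivAt_gauss_Ioi ξ).const_mul c
    simpa [mul_neg] using this
  -- time derivative
  have hu : HasDerivAt (fun s' : ℝ => (L + a * s') / (2 * Real.sqrt s'))
      ((a * (2 * s) - (L + a * t) * (2 * (1 / (2 * s)))) / (2 * s) ^ 2) t := by
    have h1 : HasDerivAt (fun s' : ℝ => L + a * s') a t := by
      have := ((hasDerivAt_id' t).const_mul a).const_add L; rw [mul_one] at this; exact this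
    have h2 : HasDerivAt (fun s' : ℝ => 2 * Real.sqrt s') (2 * (1 / (2 * s))) t :=
      (Real.hasDerivAt_sqrt ht.ne').const_mul 2
    have hne : 2 * Real.sqrt t ≠ 0 := by positivity
    exact h1.div h2 hne
  have hEt : HasDerivAt (fun s' => E r s')
      (-(c * Real.exp (-((L + a * t) / (2 * s)) ^ 2))
        * ((a * (2 * s) - (L + a * t) * (2 * (1 / (2 * s)))) / (2 * s) ^ 2)) t := by
    have heq : (fun s' => E r s')
        = (erfc ∘ fun s' : ℝ => (L + a * s') / (2 * Real.sqrt s')) := by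
      funext s'; simp [hE, Function.comp, hL]
    rw [heq]
    exact (herfc' ((L + a * t) / (2 * s))).comp t hu
  -- spatial derivatives
  have hv : ∀ ρ : ℝ, 0 < ρ →
      HasDerivAt (fun σ : ℝ => (Real.log σ + a * t) / (2 * s)) (ρ⁻¹ / (2 * s)) ρ :=
    fun ρ hρ => ((Real.hasDerivAt_log hρ.ne').add_const (a * t)).div_const (2 * s)
  have hEr : ∀ ρ : ℝ, 0 < ρ → HasDerivAt (fun σ => E σ t)
      (-(c * Real.exp (-((Real.log ρ + a * t) / (2 * s)) ^ 2)) * (ρ⁻¹ / (2 * s))) ρ := by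
    intro ρ hρ
    have heq : (fun σ => E σ t) = (erfc ∘ fun σ : ℝ => (Real.log σ + a * t) / (2 * s)) := by
      funext σ; simp [hE, Function.comp, ← hsdef]
    rw [heq]
    exact (herfc' ((Real.log ρ + a * t) / (2 * s))).comp ρ (hv ρ hρ)
  have hd1 : ∀ ρ : ℝ, 0 < ρ → deriv (fun σ => E σ t) ρ
      = -(c * (Real.exp (-((Real.log ρ + a * t) / (2 * s)) ^ 2) * (ρ⁻¹ / (2 * s)))) := by
    intro ρ hρ
    rw [(hEr ρ hρ).deriv]; ring
  -- second spatial derivative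
  have hX : HasDerivAt (fun ρ : ℝ => Real.exp (-((Real.log ρ + a * t) / (2 * s)) ^ 2))
      (Real.exp (-((L + a * t) / (2 * s)) ^ 2)
        * (-(2 * ((L + a * t) / (2 * s)) ^ 1 * (r⁻¹ / (2 * s))))) r :=
    (((hv r hr).pow 2).neg).exp
  have hI : HasDerivAt (fun ρ : ℝ => ρ⁻¹ / (2 * s)) (-(r ^ 2)⁻¹ / (2 * s)) r :=
    (hasDerivAt_inv hr.ne').div_const (2 * s)
  have hg : HasDerivAt
      (fun ρ : ℝ => -(c * (Real.exp (-((Real.log ρ + a * t) / (2 * s)) ^ 2) * (ρ⁻¹ / (2 * s)))))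
      (-(c * (Real.exp (-((L + a * t) / (2 * s)) ^ 2)
            * (-(2 * ((L + a * t) / (2 * s)) ^ 1 * (r⁻¹ / (2 * s)))) * (r⁻¹ / (2 * s))
          + Real.exp (-((L + a * t) / (2 * s)) ^ 2) * (-(r ^ 2)⁻¹ / (2 * s))))) r :=
    ((hX.mul hI).const_mul c).neg
  have hev : (fun ρ => deriv (fun σ => E σ t) ρ)
      =ᶠ[nhds r] (fun ρ : ℝ =>
        -(c * (Real.exp (-((Real.log ρ + a * t) / (2 * s)) ^ 2) * (ρ⁻¹ / (2 * s))))) :=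
    Filter.eventuallyEq_of_mem (Ioi_mem_nhds hr) (fun ρ hρ => hd1 ρ hρ)
  rw [hEt.deriv, hev.deriv_eq, hg.deriv, hd1 r hr]
  have ht' : t = s ^ 2 := (Real.sq_sqrt ht.le).symm
  have hs' : s ≠ 0 := hs0.ne'
  rw [ht']
  rw [ha]
  field_simp
  ring
end

section
/- Let v be a bounded solution of the one-dimensional heat equation v_t = v_yy on ℝ × (0,∞) given by convolution of an initial datum v₀ ∈ L¹(ℝ) ∩ L^∞(ℝ) with the Gaussian heat kernel. Then √t · ‖v(·,t) − M·G(·,t)‖_{L^∞(ℝ)} → 0 as t → ∞, where M = ∫_ℝ v₀(y) dy and G(y,t) = (1/√(4πt))·e^{−y²/(4t)}. -/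
open Real MeasureTheory Filter

lemma aux_abs_mul_exp (x : ℝ) : |x| * Real.exp (-x ^ 2) ≤ 1 := by
  have h2 : |x| ≤ x ^ 2 + 1 := by nlinarith [abs_nonneg x, sq_abs x]
  have h3 : x ^ 2 + 1 ≤ Real.exp (x ^ 2) := by
    have := Real.add_one_le_exp (x ^ 2); linarith
  calc |x| * Real.exp (-x ^ 2) ≤ Real.exp (x ^ 2) * Real.exp (-x ^ 2) :=
        mul_le_mul_of_nonneg_right (h2.trans h3) (Real.exp_nonneg _)
    _ = 1 := by rw [← Real.exp_add]; simp

lemma heat_hasDerivAt (t y : ℝ) :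
    HasDerivAt (fun y : ℝ => (1 / Real.sqrt (4 * π * t)) * Real.exp (-y ^ 2 / (4 * t)))
      ((1 / Real.sqrt (4 * π * t)) * (Real.exp (-y ^ 2 / (4 * t)) * (-(2 * y) / (4 * t)))) y := by
  have h1 : HasDerivAt (fun y : ℝ => -y ^ 2 / (4 * t)) (-(2 * y) / (4 * t)) y := by
    simpa using (hasDerivAt_pow 2 y).neg.div_const (4 * t)
  exact h1.exp.const_mul _

lemma heat_deriv_bound {t : ℝ} (ht : 0 < t) (y : ℝ) :
    |(1 / Real.sqrt (4 * π * t)) * (Real.exp (-y ^ 2 / (4 * t)) * (-(2 * y) / (4 * t)))| ≤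
      1 / (Real.sqrt (4 * π) * t) := by
  have hs : 0 < Real.sqrt t := Real.sqrt_pos.mpr ht
  have ha : 0 < Real.sqrt (4 * π) := Real.sqrt_pos.mpr (by positivity)
  have hss : Real.sqrt t * Real.sqrt t = t := Real.mul_self_sqrt ht.le
  have hsplit : Real.sqrt (4 * π * t) = Real.sqrt (4 * π) * Real.sqrt t :=
    Real.sqrt_mul (by positivity) t
  set x := y / (2 * Real.sqrt t) with hx
  have hx2 : -y ^ 2 / (4 * t) = -x ^ 2 := by
    rw [hx]; field_simp; rw [Real.sq_sqrt ht.le]; norm_num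
  have hy : |y| = 2 * Real.sqrt t * |x| := by
    rw [hx, abs_div, abs_of_pos (by positivity : (0:ℝ) < 2 * Real.sqrt t)]
    field_simp
  have key := aux_abs_mul_exp x
  rw [abs_mul, abs_mul, hx2, abs_of_pos (by positivity : (0:ℝ) < 1 / Real.sqrt (4 * π * t)),
    abs_of_pos (Real.exp_pos _)]
  have h1 : |(-(2 * y) / (4 * t))| = |y| / (2 * t) := by
    rw [abs_div, abs_neg, abs_mul, abs_of_pos (by norm_num : (0:ℝ) < 2),
      abs_of_pos (by positivity : (0:ℝ) < 4 * t)]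
    rw [div_eq_div_iff (by positivity) (by positivity)]; ring
  rw [h1, hy, hsplit]
  have heq : 1 / (Real.sqrt (4 * π) * Real.sqrt t) *
      (Real.exp (-x ^ 2) * (2 * Real.sqrt t * |x| / (2 * t)))
      = (|x| * Real.exp (-x ^ 2)) / (Real.sqrt (4 * π) * t) := by
    field_simp
  rw [heq]
  gcongr

lemma heat_lip {t : ℝ} (ht : 0 < t) (y s : ℝ) :
    |(1 / Real.sqrt (4 * π * t)) * Real.exp (-(y - s) ^ 2 / (4 * t)) -
      (1 / Real.sqrt (4 * π * t)) * Real.exp (-y ^ 2 / (4 * t))| ≤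
      |s| / (Real.sqrt (4 * π) * t) := by
  have h := Convex.norm_image_sub_le_of_norm_hasDerivWithin_le
    (f := fun z : ℝ => (1 / Real.sqrt (4 * π * t)) * Real.exp (-z ^ 2 / (4 * t)))
    (f' := fun z => (1 / Real.sqrt (4 * π * t)) * (Real.exp (-z ^ 2 / (4 * t)) * (-(2 * z) / (4 * t))))
    (C := 1 / (Real.sqrt (4 * π) * t)) (s := Set.univ)
    (fun z _ => (heat_hasDerivAt t z).hasDerivWithinAt)
    (fun z _ => by simpa only [Real.norm_eq_abs] using heat_deriv_bound ht z)
    convex_univ (Set.mem_univ y) (Set.mem_univ (y - s))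
  have h2 : ‖y - s - y‖ = |s| := by
    have h3 : y - s - y = -s := by ring
    rw [h3, Real.norm_eq_abs, abs_neg]
  rw [Real.norm_eq_abs, h2] at h
  calc _ ≤ 1 / (Real.sqrt (4 * π) * t) * |s| := h
    _ = |s| / (Real.sqrt (4 * π) * t) := by ring

/-- If `v` is the heat-kernel convolution solution of `vₜ = v_yy` with initial datum
`v₀ ∈ L¹ ∩ L^∞`, then `√t · ‖v(·,t) - M G(·,t)‖_∞ → 0` as `t → ∞`, where `M = ∫ v₀` and
`G(y,t) = (4πt)^{-1/2} e^{-y²/(4t)}` is the Gaussian heat kernel. -/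
theorem stmt6 (v₀ : ℝ → ℝ) (hint : Integrable v₀) (hbdd : ∃ C, ∀ y, |v₀ y| ≤ C)
    (G : ℝ → ℝ → ℝ)
    (hG : ∀ y t : ℝ, G y t = (1 / Real.sqrt (4 * π * t)) * Real.exp (-y ^ 2 / (4 * t)))
    (v : ℝ → ℝ → ℝ) (hv : ∀ y t : ℝ, 0 < t → v y t = ∫ s : ℝ, G (y - s) t * v₀ s) :
    Tendsto (fun t : ℝ => Real.sqrt t * ⨆ y : ℝ, |v y t - (∫ s : ℝ, v₀ s) * G y t|)
      atTop (nhds 0) := by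
  have ha : 0 < Real.sqrt (4 * π) := Real.sqrt_pos.mpr (by positivity)
  set a := Real.sqrt (4 * π) with ha_def
  set M : ℝ := ∫ s : ℝ, v₀ s with hM_def
  -- the dominating/upper function
  set h : ℝ → ℝ := fun t => ∫ s : ℝ, ((1 / a) * min 2 (|s| / Real.sqrt t)) * |v₀ s| with hh_def
  -- Step 1: pointwise bound
  have step1 : ∀ t : ℝ, 0 < t → ∀ y : ℝ,
      |v y t - M * G y t| ≤ ∫ s : ℝ, min (2 / Real.sqrt (4 * π * t)) (|s| / (a * t)) * |v₀ s| := by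
    intro t ht y
    have hst : 0 < Real.sqrt (4 * π * t) := Real.sqrt_pos.mpr (by positivity)
    have hGbd : ∀ z : ℝ, |G z t| ≤ 1 / Real.sqrt (4 * π * t) := by
      intro z
      rw [hG, abs_mul, abs_of_pos (by positivity : (0:ℝ) < 1 / Real.sqrt (4 * π * t)),
        abs_of_pos (Real.exp_pos _)]
      have : Real.exp (-z ^ 2 / (4 * t)) ≤ 1 := by
        apply Real.exp_le_one_iff.mpr
        apply div_nonpos_of_nonpos_of_nonneg (by nlinarith [sq_nonneg z]) (by positivity)
      exact mul_le_of_le_one_right (by positivity) this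
    have hcont : Continuous fun s : ℝ => G (y - s) t := by
      have hfe : (fun s : ℝ => G (y - s) t) =
          fun s : ℝ => (1 / Real.sqrt (4 * π * t)) * Real.exp (-(y - s) ^ 2 / (4 * t)) :=
        funext fun s => hG _ _
      rw [hfe]; fun_prop
    have hi1 : Integrable fun s : ℝ => G (y - s) t * v₀ s :=
      hint.bdd_mul hcont.aestronglyMeasurable
        (Eventually.of_forall fun s => by
          simpa only [Real.norm_eq_abs] using hGbd (y - s))
    have hi2 : Integrable fun s : ℝ => G y t * v₀ s := hint.const_mul _
    have hsub : v y t - M * G y t = ∫ s : ℝ, (G (y - s) t - G y t) * v₀ s := by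
      rw [hv y t ht]
      have : M * G y t = ∫ s : ℝ, G y t * v₀ s := by
        rw [integral_const_mul]; ring
      rw [this, ← integral_sub hi1 hi2]
      congr 1; funext s; ring
    have hRHSint : Integrable fun s : ℝ =>
        min (2 / Real.sqrt (4 * π * t)) (|s| / (a * t)) * |v₀ s| := by
      apply hint.abs.bdd_mul (c := 2 / Real.sqrt (4 * π * t))
      · exact (continuous_const.min ((continuous_abs).div_const _)).aestronglyMeasurable
      · refine Eventually.of_forall fun s => ?_
        rw [Real.norm_eq_abs, abs_of_nonneg (le_min (by positivity) (by positivity))]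
        exact min_le_left _ _
    rw [hsub]
    calc |∫ s : ℝ, (G (y - s) t - G y t) * v₀ s|
        ≤ ∫ s : ℝ, ‖(G (y - s) t - G y t) * v₀ s‖ := by
          rw [← Real.norm_eq_abs]; exact norm_integral_le_integral_norm _
      _ ≤ ∫ s : ℝ, min (2 / Real.sqrt (4 * π * t)) (|s| / (a * t)) * |v₀ s| := by
          apply integral_mono_of_nonneg
          · exact Eventually.of_forall fun s => norm_nonneg _
          · exact hRHSint
          · apply Eventually.of_forall
            intro s
            show ‖(G (y - s) t - G y t) * v₀ s‖ ≤ _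
            rw [Real.norm_eq_abs, abs_mul]
            apply mul_le_mul_of_nonneg_right _ (abs_nonneg _)
            apply le_min
            · calc |G (y - s) t - G y t| ≤ |G (y - s) t| + |G y t| := abs_sub _ _
                _ ≤ 1 / Real.sqrt (4 * π * t) + 1 / Real.sqrt (4 * π * t) :=
                    add_le_add (hGbd _) (hGbd _)
                _ = 2 / Real.sqrt (4 * π * t) := by ring
            · rw [hG (y - s) t, hG y t]
              exact heat_lip ht y s
  -- Step 2: sup bound
  have step2 : ∀ t : ℝ, 0 < t →
      Real.sqrt t * (⨆ y : ℝ, |v y t - M * G y t|) ≤ h t := by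
    intro t ht
    have hs : 0 < Real.sqrt t := Real.sqrt_pos.mpr ht
    have hss : Real.sqrt t * Real.sqrt t = t := Real.mul_self_sqrt ht.le
    have hsplit : Real.sqrt (4 * π * t) = a * Real.sqrt t := Real.sqrt_mul (by positivity) t
    have hsup : (⨆ y : ℝ, |v y t - M * G y t|) ≤
        ∫ s : ℝ, min (2 / Real.sqrt (4 * π * t)) (|s| / (a * t)) * |v₀ s| :=
      ciSup_le fun y => step1 t ht y
    calc Real.sqrt t * (⨆ y : ℝ, |v y t - M * G y t|)
        ≤ Real.sqrt t * ∫ s : ℝ, min (2 / Real.sqrt (4 * π * t)) (|s| / (a * t)) * |v₀ s| :=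
          mul_le_mul_of_nonneg_left hsup (Real.sqrt_nonneg t)
      _ = h t := by
          rw [hh_def, ← integral_const_mul]
          congr 1; funext s
          have e1 : Real.sqrt t * (2 / Real.sqrt (4 * π * t)) = (1 / a) * 2 := by
            rw [hsplit]; field_simp
          have e2 : Real.sqrt t * (|s| / (a * t)) = (1 / a) * (|s| / Real.sqrt t) := by
            field_simp; linear_combination |s| * hss
          rw [← mul_assoc, mul_min_of_nonneg _ _ (Real.sqrt_nonneg t), e1, e2,
            ← mul_min_of_nonneg _ _ (by positivity : (0:ℝ) ≤ 1 / a)]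
  -- Step 3: h tends to 0
  have step3 : Tendsto h atTop (nhds 0) := by
    have hsq : Tendsto Real.sqrt atTop atTop := by
      apply tendsto_atTop_atTop.mpr
      intro b
      refine ⟨b ^ 2, fun x hx => ?_⟩
      calc b ≤ |b| := le_abs_self b
        _ = Real.sqrt (b ^ 2) := (Real.sqrt_sq_eq_abs b).symm
        _ ≤ Real.sqrt x := Real.sqrt_le_sqrt hx
    have key := tendsto_integral_filter_of_dominated_convergence
      (μ := (volume : Measure ℝ)) (l := (atTop : Filter ℝ))
      (F := fun t s => ((1 / a) * min 2 (|s| / Real.sqrt t)) * |v₀ s|)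
      (f := fun _ : ℝ => (0:ℝ))
      (bound := fun s => (1 / a) * 2 * |v₀ s|)
      (Eventually.of_forall fun t =>
        ((continuous_const.mul (continuous_const.min
          ((continuous_abs).div_const _))).aestronglyMeasurable).mul
          hint.abs.aestronglyMeasurable)
      (Eventually.of_forall fun t => Eventually.of_forall fun s => by
        have hmn : (0:ℝ) ≤ min 2 (|s| / Real.sqrt t) :=
          le_min (by norm_num) (by positivity)
        rw [Real.norm_eq_abs, abs_of_nonneg (by positivity)]
        exact mul_le_mul_of_nonneg_right
          (mul_le_mul_of_nonneg_left (min_le_left _ _) (by positivity)) (abs_nonneg _))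
      ((hint.abs).const_mul _)
      (Eventually.of_forall fun s => by
        have l1 : Tendsto (fun t : ℝ => |s| / Real.sqrt t) atTop (nhds 0) := by
          have := tendsto_const_nhds (x := |s|) (f := (atTop : Filter ℝ)) |>.mul
            hsq.inv_tendsto_atTop
          simpa [div_eq_mul_inv] using this
        have l2 : Tendsto (fun t : ℝ => min 2 (|s| / Real.sqrt t)) atTop (nhds 0) := by
          have := (tendsto_const_nhds (x := (2:ℝ)) (f := (atTop : Filter ℝ))).min l1
          simpa using this
        have := ((tendsto_const_nhds (x := 1 / a) (f := (atTop : Filter ℝ))).mul l2).mul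
          (tendsto_const_nhds (x := |v₀ s|))
        simpa using this)
    simpa only [integral_zero] using key
  -- conclude by squeezing
  apply tendsto_of_tendsto_of_tendsto_of_le_of_le' tendsto_const_nhds step3
  · exact Eventually.of_forall fun t =>
      mul_nonneg (Real.sqrt_nonneg t) (Real.iSup_nonneg fun y => abs_nonneg _)
  · filter_upwards [eventually_gt_atTop (0:ℝ)] with t ht
    exact step2 t ht
end

section
/- Let N, N̄ ≥ 3 and let u be a radially symmetric solution of |x|^{-2}u_t = Δu in ℝ^N × (0,∞) (away from x = 0). Define ū(x̄,t) = u(x,t) where |x| = |x̄|·e^{(N̄−N)t}. Then ū is a radially symmetric solution of |x̄|^{-2}ū_t = Δū in dimension N̄ (away from x̄ = 0). -/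
open Real

private lemma clm_pair (T : ℝ × ℝ →L[ℝ] ℝ) (a b : ℝ) :
    T (a, b) = a * T (1, 0) + b * T (0, 1) := by
  have h : (a, b) = a • ((1 : ℝ), (0 : ℝ)) + b • ((0 : ℝ), (1 : ℝ)) := by
    simp [Prod.ext_iff]
  rw [h, map_add, map_smul, map_smul, smul_eq_mul, smul_eq_mul]

private lemma hasDerivAt_comp2 (H : ℝ × ℝ → ℝ) (hH : Differentiable ℝ H)
    (φ ψ : ℝ → ℝ) (a b s : ℝ) (hφ : HasDerivAt φ a s) (hψ : HasDerivAt ψ b s) :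
    HasDerivAt (fun u => H (φ u, ψ u)) (fderiv ℝ H (φ s, ψ s) (a, b)) s :=
  ((hH (φ s, ψ s)).hasFDerivAt).comp_hasDerivAt s (hφ.prodMk hψ)

/-- Self-map of the equation `|x|^{-2}uₜ = Δu` between dimensions `N` and `N̄`: if the radial
profile `f(r,t)` solves `(1/r²)fₜ = f_rr + ((N-1)/r)f_r`, then
`f̄(r̄,t) = f(r̄·e^{(N̄-N)t}, t)` solves the corresponding equation in dimension `N̄`. -/
theorem stmt12 (N M : ℕ) (hN : 3 ≤ N) (hM : 3 ≤ M)
    (f : ℝ → ℝ → ℝ) (hf : ContDiff ℝ 2 (Function.uncurry f))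
    (hsol : ∀ r t : ℝ, 0 < r → 0 < t →
      (1 / r ^ 2) * deriv (fun s => f r s) t =
        deriv (fun ρ => deriv (fun σ => f σ t) ρ) r
          + (((N : ℝ) - 1) / r) * deriv (fun σ => f σ t) r)
    (g : ℝ → ℝ → ℝ)
    (hg : ∀ r t : ℝ, g r t = f (r * Real.exp (((M : ℝ) - (N : ℝ)) * t)) t) :
    ∀ r t : ℝ, 0 < r → 0 < t →
      (1 / r ^ 2) * deriv (fun s => g r s) t =
        deriv (fun ρ => deriv (fun σ => g σ t) ρ) r
          + (((M : ℝ) - 1) / r) * deriv (fun σ => g σ t) r := by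
  intro r t hr ht
  set F : ℝ × ℝ → ℝ := Function.uncurry f with hF
  have hFd : Differentiable ℝ F := hf.differentiable (by norm_num)
  set G : ℝ × ℝ → ℝ := fun p => fderiv ℝ F p (1, 0) with hGdef
  have hG : ContDiff ℝ 1 G :=
    (hf.fderiv_right (le_refl 2)).clm_apply contDiff_const
  have hGd : Differentiable ℝ G := hG.differentiable one_ne_zero
  set c : ℝ := (M : ℝ) - (N : ℝ) with hc
  set L : ℝ := Real.exp (c * t) with hL
  set R : ℝ := r * L with hRdef
  have hLpos : 0 < L := Real.exp_pos _
  have hRpos : 0 < R := mul_pos hr hLpos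
  -- f in x direction has derivative G
  have hfx : ∀ x τ : ℝ, HasDerivAt (fun σ => f σ τ) (G (x, τ)) x := by
    intro x τ
    exact hasDerivAt_comp2 F hFd id (fun _ => τ) 1 0 x (hasDerivAt_id x)
      (hasDerivAt_const x τ)
  -- first partial derivatives of f
  have hA : ∀ x τ : ℝ, deriv (fun σ => f σ τ) x = G (x, τ) := fun x τ => (hfx x τ).deriv
  have hB : ∀ x τ : ℝ, deriv (fun s => f x s) τ = fderiv ℝ F (x, τ) (0, 1) := by
    intro x τ
    exact (hasDerivAt_comp2 F hFd (fun _ => x) id 0 1 τ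
      (hasDerivAt_const τ x) (hasDerivAt_id τ)).deriv
  -- second radial derivative of f
  have hD : ∀ x τ : ℝ, deriv (fun ρ => deriv (fun σ => f σ τ) ρ) x
      = fderiv ℝ G (x, τ) (1, 0) := by
    intro x τ
    have h1 : (fun ρ => deriv (fun σ => f σ τ) ρ) = fun ρ => G (ρ, τ) := by
      funext ρ; exact hA ρ τ
    rw [h1]
    exact (hasDerivAt_comp2 G hGd id (fun _ => τ) 1 0 x (hasDerivAt_id x)
      (hasDerivAt_const x τ)).deriv
  -- time derivative of g at (r,t)
  have hgt : deriv (fun s => g r s) t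
      = (c * R) * G (R, t) + fderiv ℝ F (R, t) (0, 1) := by
    have h1 : (fun s => g r s) = fun s => F (r * Real.exp (c * s), s) := by
      funext s; exact hg r s
    rw [h1]
    have hφ : HasDerivAt (fun s => r * Real.exp (c * s)) (r * (Real.exp (c * t) * (c * 1))) t :=
      (((hasDerivAt_id t).const_mul c).exp).const_mul r
    have := hasDerivAt_comp2 F hFd (fun s => r * Real.exp (c * s)) id
      (r * (Real.exp (c * t) * (c * 1))) 1 t hφ (hasDerivAt_id t)
    have hd := this.deriv
    simp only [id_eq] at hd
    rw [hd, clm_pair]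
    have e1 : r * Real.exp (c * t) = R := rfl
    have e2 : Real.exp (c * t) = L := rfl
    have e3 : (fderiv ℝ F (R, t)) (1, 0) = G (R, t) := rfl
    rw [e1, e2, e3, hRdef]
    ring
  -- radial derivative of g
  have hgr : ∀ ρ : ℝ, deriv (fun σ => g σ t) ρ = L * G (ρ * L, t) := by
    intro ρ
    have h1 : (fun σ => g σ t) = fun σ => F (σ * L, t) := by
      funext σ; exact hg σ t
    rw [h1]
    have := hasDerivAt_comp2 F hFd (fun σ => σ * L) (fun _ => t) L 0 ρ
      (hasDerivAt_mul_const L) (hasDerivAt_const ρ t)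
    rw [this.deriv, clm_pair]
    simp [hGdef]
  -- second radial derivative of g
  have hgrr : deriv (fun ρ => deriv (fun σ => g σ t) ρ) r
      = L * (L * fderiv ℝ G (R, t) (1, 0)) := by
    have h1 : (fun ρ => deriv (fun σ => g σ t) ρ) = fun ρ => L * G (ρ * L, t) := by
      funext ρ; exact hgr ρ
    rw [h1]
    have := (hasDerivAt_comp2 G hGd (fun σ => σ * L) (fun _ => t) L 0 r
      (hasDerivAt_mul_const L) (hasDerivAt_const r t)).const_mul L
    rw [this.deriv, clm_pair]
    have hR' : r * L = R := rfl
    rw [hR']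
    ring
  -- the PDE for f at (R, t)
  have hsolR := hsol R t hRpos ht
  rw [hB, hD, hA] at hsolR
  -- put everything together
  rw [hgt, hgrr, hgr r]
  have hR' : r * L = R := rfl
  rw [hR']
  set Fr : ℝ := G (R, t)
  set Ft : ℝ := fderiv ℝ F (R, t) (0, 1)
  set Frr : ℝ := fderiv ℝ G (R, t) (1, 0)
  have hFt : Ft = R ^ 2 * Frr + ((N : ℝ) - 1) * R * Fr := by
    have hR0 : R ≠ 0 := ne_of_gt hRpos
    field_simp at hsolR
    have h2 : Ft * R = (R ^ 2 * Frr + ((N : ℝ) - 1) * R * Fr) * R := by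
      rw [hsolR]; ring
    exact mul_right_cancel₀ hR0 h2
  rw [hFt, hRdef, hc]
  have hr0 : r ≠ 0 := ne_of_gt hr
  field_simp
  ring
end

section
/- Let N ≥ 3. Write points of ℝ^N \ {0} in generalized spherical coordinates (r, φ₁, …, φ_{N−2}, θ) and define F_N(x,t) = θ·F(r,t), where F(r,t) = (1/√(4πt))·exp(−(log r + (N−2)t)²/(4t)). Then F_N satisfies |x|^{-2}∂_t F_N = ΔF_N on (ℝ^N \ {0}) × (0,∞) away from the coordinate singularities, and F_N is not radially symmetric. -/
open Real

/-- In generalized spherical coordinates on `ℝ^N \ {0}`, the function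
`F_N(r,θ,t) = θ·F(r,t)` (no dependence on the other angles, linear in the last angular
coordinate `θ`, so its spherical Laplacian reduces to `θ·(F_rr + ((N-1)/r)F_r)`) satisfies
`|x|^{-2}∂ₜF_N = ΔF_N` away from the coordinate singularities, and `F_N` is not radially
symmetric. -/
theorem stmt13 (N : ℕ) (hN : 3 ≤ N) (F : ℝ → ℝ → ℝ)
    (hF : ∀ r t : ℝ, F r t = (1 / Real.sqrt (4 * π * t)) *
      Real.exp (-(Real.log r + ((N : ℝ) - 2) * t) ^ 2 / (4 * t)))
    (FN : ℝ → ℝ → ℝ → ℝ) (hFN : ∀ r θ t : ℝ, FN r θ t = θ * F r t) :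
    (∀ r θ t : ℝ, 0 < r → 0 < t →
      (1 / r ^ 2) * deriv (fun s => FN r θ s) t =
        θ * (deriv (fun ρ => deriv (fun σ => F σ t) ρ) r
          + (((N : ℝ) - 1) / r) * deriv (fun σ => F σ t) r)) ∧
    (∃ r θ₁ θ₂ t : ℝ, 0 < r ∧ 0 < t ∧ FN r θ₁ t ≠ FN r θ₂ t) := by
  have hπ : (0:ℝ) < π := Real.pi_pos
  constructor
  · intro r θ t hr ht
    have hr0 : r ≠ 0 := ne_of_gt hr
    have ht0 : t ≠ 0 := ne_of_gt ht
    have h4πt : (0:ℝ) < 4 * π * t := by positivity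
    have hS : (0:ℝ) < Real.sqrt (4 * π * t) := Real.sqrt_pos.mpr h4πt
    set a : ℝ := (N:ℝ) - 2 with ha
    -- first spatial derivative
    have hFr : ∀ ρ : ℝ, 0 < ρ → HasDerivAt (fun σ => F σ t)
        (F ρ t * (-(Real.log ρ + a*t)/(2*t*ρ))) ρ := by
      intro ρ hρ
      have hfun : (fun σ => F σ t) = fun σ =>
          (1 / Real.sqrt (4 * π * t)) * Real.exp (-(Real.log σ + a*t)^2/(4*t)) :=
        funext fun σ => hF σ t
      have hlog : HasDerivAt (fun σ : ℝ => Real.log σ + a*t) ρ⁻¹ ρ :=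
        (Real.hasDerivAt_log (ne_of_gt hρ)).add_const _
      have hmul := (((hlog.pow 2).neg.div_const (4*t)).exp).const_mul
        (1 / Real.sqrt (4 * π * t))
      rw [hfun]
      have hmul' : HasDerivAt (fun σ : ℝ => (1 / Real.sqrt (4 * π * t)) * Real.exp (-(Real.log σ + a*t)^2/(4*t)))
          ((1 / Real.sqrt (4 * π * t)) * (Real.exp (-(Real.log ρ + a*t)^2/(4*t)) *
            (-(((2:ℕ):ℝ) * (Real.log ρ + a*t)^(2-1) * ρ⁻¹)/(4*t)))) ρ := hmul
      convert hmul' using 1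
      rw [hF ρ t]
      have hρ0 : ρ ≠ 0 := ne_of_gt hρ
      field_simp
      ring
    -- second spatial derivative
    have hmden : (2*t*r) ≠ 0 := by positivity
    have hm : HasDerivAt (fun ρ : ℝ => -(Real.log ρ + a*t)/(2*t*ρ))
        (((-r⁻¹) * (2*t*r) - (-(Real.log r + a*t)) * (2*t)) / (2*t*r)^2) r := by
      have hnum : HasDerivAt (fun ρ : ℝ => -(Real.log ρ + a*t)) (-r⁻¹) r :=
        ((Real.hasDerivAt_log hr0).add_const _).neg
      have hden : HasDerivAt (fun ρ : ℝ => 2*t*ρ) (2*t) r := by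
        simpa using (hasDerivAt_id r).const_mul (2*t)
      exact hnum.div hden hmden
    have hG := (hFr r hr).mul hm
    have hev : (deriv fun σ => F σ t) =ᶠ[nhds r]
        fun ρ => F ρ t * (-(Real.log ρ + a*t)/(2*t*ρ)) := by
      filter_upwards [eventually_gt_nhds hr] with ρ hρ
      exact (hFr ρ hρ).deriv
    have hd2 : deriv (fun ρ => deriv (fun σ => F σ t) ρ) r =
        F r t * (-(Real.log r + a*t)/(2*t*r)) * (-(Real.log r + a*t)/(2*t*r)) +
        F r t * (((-r⁻¹) * (2*t*r) - (-(Real.log r + a*t)) * (2*t)) / (2*t*r)^2) := by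
      rw [hev.deriv_eq]; exact hG.deriv
    -- time derivative
    have hFalt : ∀ s : ℝ, 0 < s → F r s =
        Real.exp (-(Real.log r + a*s)^2/(4*s) - Real.log (4*π*s)/2) := by
      intro s hs
      have h4πs : (0:ℝ) < 4 * π * s := by positivity
      have hSs : (0:ℝ) < Real.sqrt (4 * π * s) := Real.sqrt_pos.mpr h4πs
      have hexp : Real.exp (Real.log (4*π*s)/2) = Real.sqrt (4*π*s) := by
        rw [← Real.log_sqrt h4πs.le, Real.exp_log hSs]
      rw [hF r s, Real.exp_sub, hexp]
      ring
    have hevt : (fun s => FN r θ s) =ᶠ[nhds t]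
        fun s => θ * Real.exp (-(Real.log r + a*s)^2/(4*s) - Real.log (4*π*s)/2) := by
      filter_upwards [eventually_gt_nhds ht] with s hs
      rw [hFN, hFalt s hs]
    have h1 : HasDerivAt (fun s : ℝ => Real.log r + a*s) a t := by
      simpa using ((hasDerivAt_id t).const_mul a).const_add (Real.log r)
    have hden4 : (4*t) ≠ 0 := by positivity
    have hd4 : HasDerivAt (fun s : ℝ => 4*s) 4 t := by
      simpa using (hasDerivAt_id t).const_mul (4:ℝ)
    have hdiv := (h1.pow 2).neg.div hd4 hden4
    have hlog4 : HasDerivAt (fun s : ℝ => Real.log (4*π*s)) ((4*π)/(4*π*t)) t := by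
      have := ((hasDerivAt_id t).const_mul (4*π)).log (ne_of_gt h4πt)
      simpa using this
    have he := (hdiv.sub (hlog4.div_const 2)).exp
    have hgt := he.const_mul θ
    have hdt : deriv (fun s => FN r θ s) t =
        θ * (Real.exp (-(Real.log r + a*t)^2/(4*t) - Real.log (4*π*t)/2) *
          (((-(↑2 * (Real.log r + a*t)^(2-1) * a)) * (4*t) - (-(Real.log r + a*t)^2) * 4) / (4*t)^2
            - (4*π)/(4*π*t)/2)) := by
      rw [hevt.deriv_eq]; exact hgt.deriv
    -- put everything together
    rw [hdt, hd2, (hFr r hr).deriv, ← hFalt t ht]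
    rw [ha]
    have hF0 : F r t = F r t := rfl
    set A := F r t with hA
    field_simp
    ring
  · refine ⟨1, 0, 1, 1, one_pos, one_pos, ?_⟩
    rw [hFN, hFN, zero_mul, one_mul]
    have : F 1 1 ≠ 0 := by
      rw [hF]
      positivity
    exact fun h => this h.symm
end

section
/- Let α ∈ (0,1) and on ℝ × (0,∞) define F₁(x,t) = α·F(x,t) for x ≤ 0 and F₁(x,t) = (1−α)·F(x,t) for x > 0, where F(x,t) = (1/√(4πt))·exp(−(log|x| − t)²/(4t)) for x ≠ 0 and F(0,t) = 0. Then F₁ is continuous on ℝ × (0,∞) and satisfies x^{-2}∂_t F₁ = ∂_xx F₁ at every (x,t) with x ≠ 0, t > 0. -/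
open Real

lemma stmt16_time_deriv (L : ℝ) {t : ℝ} (ht : 0 < t) :
    HasDerivAt (fun s : ℝ => (1 / Real.sqrt (4*π*s)) * Real.exp (-(L - s)^2 / (4*s)))
      ((1 / Real.sqrt (4*π*t)) * Real.exp (-(L - t)^2 / (4*t)) *
        (-1/(2*t) + (L-t)/(2*t) + (L-t)^2/(4*t^2))) t := by
  have hπ : (0:ℝ) < π := Real.pi_pos
  have h4πt : (0:ℝ) < 4*π*t := by positivity
  have hS : 0 < Real.sqrt (4*π*t) := Real.sqrt_pos.2 h4πt
  have hS2 : Real.sqrt (4*π*t) ^ 2 = 4*π*t := Real.sq_sqrt h4πt.le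
  have h1 : HasDerivAt (fun s : ℝ => 4*π*s) (4*π) t := by
    simpa using (hasDerivAt_id t).const_mul (4*π)
  have h2 : HasDerivAt (fun s : ℝ => Real.sqrt (4*π*s)) (4*π / (2*Real.sqrt (4*π*t))) t :=
    h1.sqrt h4πt.ne'
  have h3 : HasDerivAt (fun s : ℝ => 1 / Real.sqrt (4*π*s))
      (-(1/(2*t)) * (1 / Real.sqrt (4*π*t))) t := by
    have h := h2.inv hS.ne'
    have heq : -(4*π / (2*Real.sqrt (4*π*t))) / (Real.sqrt (4*π*t))^2
        = -(1/(2*t)) * (1 / Real.sqrt (4*π*t)) := by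
      rw [hS2]; field_simp
    simpa only [one_div, heq, Pi.inv_def] using h
  have hnum : HasDerivAt (fun s : ℝ => -(L - s)^2) (2*(L-t)) t := by
    have hs : HasDerivAt (fun s : ℝ => L - s) (-1) t := by
      simpa [Pi.sub_def] using (hasDerivAt_const t L).sub (hasDerivAt_id t)
    have := (hs.pow 2).neg
    refine this.congr_deriv ?_; ring
  have hden : HasDerivAt (fun s : ℝ => 4*s) 4 t := by
    simpa using (hasDerivAt_id t).const_mul (4:ℝ)
  have hquot : HasDerivAt (fun s : ℝ => -(L - s)^2 / (4*s))
      ((L-t)/(2*t) + (L-t)^2/(4*t^2)) t := by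
    have h := hnum.div hden (by positivity : 4*t ≠ 0)
    refine h.congr_deriv ?_
    field_simp; ring
  have hexp := hquot.exp
  have hmul := h3.mul hexp
  refine hmul.congr_deriv ?_
  field_simp
  ring

lemma stmt16_space_deriv1 (c t : ℝ) (ht : 0 < t) {x : ℝ} (hx : x ≠ 0) :
    HasDerivAt (fun r : ℝ => c * Real.exp (-(Real.log r - t)^2/(4*t)))
      (c * Real.exp (-(Real.log x - t)^2/(4*t)) * (-(Real.log x - t)/(2*t*x))) x := by
  have hlog := Real.hasDerivAt_log hx
  have hsub := hlog.sub_const t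
  have hsq := (hsub.pow 2).neg
  have hdiv := hsq.div_const (4*t)
  have hexp := hdiv.exp
  have := hexp.const_mul c
  refine this.congr_deriv ?_
  simp only [Pi.neg_apply, Pi.pow_apply]; field_simp
  ring

lemma stmt16_space_deriv2 (c t : ℝ) (ht : 0 < t) {x : ℝ} (hx : x ≠ 0) :
    HasDerivAt (fun r : ℝ => c * Real.exp (-(Real.log r - t)^2/(4*t)) * (-(Real.log r - t)/(2*t*r)))
      (c * Real.exp (-(Real.log x - t)^2/(4*t)) *
        ((Real.log x - t)^2/(4*t^2*x^2) + (Real.log x - t - 1)/(2*t*x^2))) x := by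
  have h1 := stmt16_space_deriv1 c t ht hx
  have hw : HasDerivAt (fun r : ℝ => -(Real.log r - t)/(2*t*r))
      ((Real.log x - t - 1)/(2*t*x^2)) x := by
    have hnum : HasDerivAt (fun r : ℝ => -(Real.log r - t)) (-x⁻¹) x :=
      ((Real.hasDerivAt_log hx).sub_const t).neg
    have hden : HasDerivAt (fun r : ℝ => 2*t*r) (2*t) x := by
      simpa using (hasDerivAt_id x).const_mul (2*t)
    have h := hnum.div hden (by positivity : 2*t*x ≠ 0)
    refine h.congr_deriv ?_
    field_simp
    ring
  have := h1.mul hw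
  refine this.congr_deriv ?_
  field_simp
  ring

lemma stmt16_sqrt_abs (x : ℝ) (hx : x ≠ 0) :
    Real.sqrt |x| = Real.exp (Real.log |x| / 2) := by
  rw [show |x| = Real.exp (Real.log |x|) from (Real.exp_log (abs_pos.2 hx)).symm,
    Real.log_exp]
  rw [show Real.exp (Real.log |x|) = Real.exp (Real.log |x|/2)^2 by
    rw [sq, ← Real.exp_add]; ring_nf]
  exact Real.sqrt_sq (Real.exp_nonneg _)

/-- In dimension `N = 1`, with `F(x,t) = (4πt)^{-1/2} exp(-(log|x| - t)²/(4t))` for `x ≠ 0`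
and `F(0,t) = 0`, the two-branch function `F₁ = α·F` on `x ≤ 0` and `(1-α)·F` on `x > 0`
(`α ∈ (0,1)`) is continuous on `ℝ × (0,∞)` and solves the one-dimensional singular-density
heat equation `x^{-2}∂ₜF₁ = ∂ₓₓF₁` at every `x ≠ 0`, `t > 0`. -/
theorem stmt16 (α : ℝ) (hα : α ∈ Set.Ioo (0 : ℝ) 1)
    (F : ℝ → ℝ → ℝ)
    (hF : ∀ r t : ℝ, F r t = if r = 0 then 0 else (1 / Real.sqrt (4 * π * t)) *
      Real.exp (-(Real.log |r| - t) ^ 2 / (4 * t)))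
    (F₁ : ℝ → ℝ → ℝ)
    (hF₁ : ∀ x t : ℝ, F₁ x t = if x ≤ 0 then α * F x t else (1 - α) * F x t) :
    ContinuousOn (fun p : ℝ × ℝ => F₁ p.1 p.2) (Set.univ ×ˢ Set.Ioi 0) ∧
    ∀ x t : ℝ, x ≠ 0 → 0 < t →
      (1 / x ^ 2) * deriv (fun s => F₁ x s) t =
        deriv (fun ρ => deriv (fun σ => F₁ σ t) ρ) x := by
  obtain ⟨hα0, hα1⟩ := hα
  have hπ : (0:ℝ) < π := Real.pi_pos
  -- nonnegativity of F
  have hFnn : ∀ r t : ℝ, 0 ≤ F r t := by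
    intro r t
    rw [hF]
    split_ifs with h
    · exact le_refl 0
    · positivity
  -- bound : F r t ≤ (1/√(4πt)) * √|r| for t > 0
  have hFbd : ∀ r t : ℝ, 0 < t → F r t ≤ (1 / Real.sqrt (4*π*t)) * Real.sqrt |r| := by
    intro r t ht
    rw [hF]
    split_ifs with h
    · subst h; simp
    · apply mul_le_mul_of_nonneg_left _ (by positivity)
      rw [stmt16_sqrt_abs r h]
      apply Real.exp_le_exp.2
      set L := Real.log |r|
      rw [div_le_div_iff₀ (by positivity) (by norm_num : (0:ℝ) < 2)]
      nlinarith [sq_nonneg L, sq_nonneg t, sq_nonneg (L - t)]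
  -- nonnegativity of F₁
  have hF₁nn : ∀ x t : ℝ, 0 ≤ F₁ x t := by
    intro x t
    rw [hF₁]
    split_ifs
    · exact mul_nonneg hα0.le (hFnn x t)
    · exact mul_nonneg (by linarith) (hFnn x t)
  -- bound on F₁
  have hF₁bd : ∀ x t : ℝ, 0 < t → F₁ x t ≤ (1 / Real.sqrt (4*π*t)) * Real.sqrt |x| := by
    intro x t ht
    rw [hF₁]
    have h1 := hFnn x t
    have h2 := hFbd x t ht
    split_ifs
    · nlinarith
    · nlinarith
  constructor
  · -- continuity
    rintro ⟨x₀, t₀⟩ ⟨-, ht₀⟩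
    simp only [Set.mem_Ioi] at ht₀
    by_cases hx₀ : x₀ = 0
    · subst hx₀
      have hval : F₁ 0 t₀ = 0 := by rw [hF₁, hF]; simp
      rw [ContinuousWithinAt, hval]
      have hg : Filter.Tendsto (fun p : ℝ × ℝ => (1 / Real.sqrt (4*π*p.2)) * Real.sqrt |p.1|)
          (nhdsWithin (0, t₀) (Set.univ ×ˢ Set.Ioi 0)) (nhds 0) := by
        have hc : ContinuousAt (fun p : ℝ × ℝ => (1 / Real.sqrt (4*π*p.2)) * Real.sqrt |p.1|)
            (0, t₀) := by
          have h1 : ContinuousAt (fun p : ℝ × ℝ => Real.sqrt (4*π*p.2)) (0, t₀) :=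
            ((continuousAt_const.mul continuousAt_snd).sqrt)
          have h2 : ContinuousAt (fun p : ℝ × ℝ => Real.sqrt |p.1|) (0, t₀) :=
            (continuousAt_fst.abs).sqrt
          exact (continuousAt_const.div h1 (ne_of_gt (Real.sqrt_pos.2 (by positivity)))).mul h2
        have h := hc.tendsto.mono_left
          (nhdsWithin_le_nhds (s := Set.univ ×ˢ Set.Ioi (0:ℝ)) (a := ((0:ℝ), t₀)))
        simpa using h
      apply squeeze_zero'
      · exact Filter.Eventually.of_forall fun p => hF₁nn p.1 p.2
      · filter_upwards [self_mem_nhdsWithin] with p hp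
        exact hF₁bd p.1 p.2 hp.2
      · exact hg
    · apply ContinuousAt.continuousWithinAt
      set c : ℝ := if x₀ ≤ 0 then α else 1 - α with hc
      have heq : (fun p : ℝ × ℝ => F₁ p.1 p.2) =ᶠ[nhds (x₀, t₀)]
          fun p => c * ((1 / Real.sqrt (4*π*p.2)) *
            Real.exp (-(Real.log p.1 - p.2)^2/(4*p.2))) := by
        rcases lt_or_gt_of_ne hx₀ with hneg | hpos
        · have hev : ∀ᶠ p : ℝ × ℝ in nhds (x₀, t₀), p.1 < 0 :=
            (isOpen_lt continuous_fst continuous_const).eventually_mem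
              (show ((x₀:ℝ), t₀) ∈ {p : ℝ × ℝ | p.1 < 0} from hneg)
          filter_upwards [hev] with p hp
          rw [hF₁, hF, if_pos hp.le, if_neg hp.ne, Real.log_abs, hc, if_pos hneg.le]
        · have hev : ∀ᶠ p : ℝ × ℝ in nhds (x₀, t₀), 0 < p.1 :=
            (isOpen_lt continuous_const continuous_fst).eventually_mem
              (show ((x₀:ℝ), t₀) ∈ {p : ℝ × ℝ | 0 < p.1} from hpos)
          filter_upwards [hev] with p hp
          rw [hF₁, hF, if_neg (not_le.2 hp), if_neg hp.ne', Real.log_abs, hc,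
            if_neg (not_le.2 hpos)]
      rw [continuousAt_congr heq]
      have hlog : ContinuousAt (fun p : ℝ × ℝ => Real.log p.1) (x₀, t₀) :=
        ContinuousAt.log continuousAt_fst hx₀
      have hinner : ContinuousAt
          (fun p : ℝ × ℝ => -(Real.log p.1 - p.2)^2/(4*p.2)) (x₀, t₀) := by
        exact ContinuousAt.div (((hlog.sub continuousAt_snd).pow 2).neg)
          (continuousAt_const.mul continuousAt_snd) (by positivity)
      have hcoef : ContinuousAt (fun p : ℝ × ℝ => 1 / Real.sqrt (4*π*p.2)) (x₀, t₀) :=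
        continuousAt_const.div ((continuousAt_const.mul continuousAt_snd).sqrt)
          (ne_of_gt (Real.sqrt_pos.2 (by positivity)))
      exact continuousAt_const.mul (hcoef.mul hinner.rexp)
  · -- PDE
    intro x t hx ht
    set c : ℝ := if x ≤ 0 then α else 1 - α with hc
    set L := Real.log x with hL
    set Ct := 1 / Real.sqrt (4*π*t) with hCt
    -- time derivative
    have hfun : (fun s => F₁ x s) =
        fun s => c * ((1 / Real.sqrt (4*π*s)) * Real.exp (-(L - s)^2/(4*s))) := by
      funext s
      rw [hF₁, hF, if_neg hx, Real.log_abs]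
      split_ifs with h <;> rw [hc] <;> simp [h, hL]
    have htd := (stmt16_time_deriv L ht).const_mul c
    have hLHS : deriv (fun s => F₁ x s) t =
        c * ((1 / Real.sqrt (4*π*t)) * Real.exp (-(L - t)^2/(4*t)) *
          (-1/(2*t) + (L-t)/(2*t) + (L-t)^2/(4*t^2))) := by
      rw [hfun]
      exact htd.deriv
    -- inner spatial derivative at any ρ ≠ 0
    have hinner : ∀ ρ : ℝ, ρ ≠ 0 → deriv (fun σ => F₁ σ t) ρ =
        (if ρ ≤ 0 then α else 1 - α) *
          (Ct * Real.exp (-(Real.log ρ - t)^2/(4*t)) * (-(Real.log ρ - t)/(2*t*ρ))) := by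
      intro ρ hρ
      set cρ : ℝ := if ρ ≤ 0 then α else 1 - α with hcρ
      have heq : (fun σ => F₁ σ t) =ᶠ[nhds ρ]
          fun σ => cρ * (Ct * Real.exp (-(Real.log σ - t)^2/(4*t))) := by
        rcases lt_or_gt_of_ne hρ with hneg | hpos
        · filter_upwards [eventually_lt_nhds hneg] with σ hσ
          rw [hF₁, hF, if_pos hσ.le, if_neg hσ.ne, Real.log_abs, hcρ, if_pos hneg.le, hCt]
        · filter_upwards [eventually_gt_nhds hpos] with σ hσ
          rw [hF₁, hF, if_neg (not_le.2 hσ), if_neg hσ.ne', Real.log_abs, hcρ,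
            if_neg (not_le.2 hpos), hCt]
      rw [heq.deriv_eq]
      exact ((stmt16_space_deriv1 Ct t ht hρ).const_mul cρ).deriv
    -- outer derivative
    have hRHS : deriv (fun ρ => deriv (fun σ => F₁ σ t) ρ) x =
        c * (Ct * Real.exp (-(L - t)^2/(4*t)) *
          ((L - t)^2/(4*t^2*x^2) + (L - t - 1)/(2*t*x^2))) := by
      have heq : (fun ρ => deriv (fun σ => F₁ σ t) ρ) =ᶠ[nhds x]
          fun ρ => c * (Ct * Real.exp (-(Real.log ρ - t)^2/(4*t)) *
            (-(Real.log ρ - t)/(2*t*ρ))) := by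
        rcases lt_or_gt_of_ne hx with hneg | hpos
        · filter_upwards [eventually_lt_nhds hneg] with ρ hρ
          rw [hinner ρ hρ.ne, if_pos hρ.le, hc, if_pos hneg.le]
        · filter_upwards [eventually_gt_nhds hpos] with ρ hρ
          rw [hinner ρ hρ.ne', if_neg (not_le.2 hρ), hc, if_neg (not_le.2 hpos)]
      rw [heq.deriv_eq]
      exact ((stmt16_space_deriv2 Ct t ht hx).const_mul c).deriv
    rw [hLHS, hRHS, hCt]
    have hx2 : x^2 ≠ 0 := pow_ne_zero 2 hx
    field_simp
    ring
end
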